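/- A connected graph G with at most C induced connected subgraphs (C ≥ 2) has pathwidth, and hence treewidth, at most 2·log₂ C. -/

import Mathlib

open Finset Classical

/-- `(T, X)` is a tree decomposition of the graph `G`. -/
def IsTreeDecomp {V ι : Type*} (G : SimpleGraph V) (T : SimpleGraph ι)
    (X : ι → Set V) : Prop :=
  T.IsTree ∧
  (∀ v : V, ∃ t : ι, v ∈ X t) ∧
  (∀ u v : V, G.Adj u v → ∃ t : ι, u ∈ X t ∧ v ∈ X t) ∧
  (∀ v : V, ∀ t₁ t₂ : ι, v ∈ X t₁ → v ∈ X t₂ →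
    ∀ p : T.Walk t₁ t₂, p.IsPath → ∀ t ∈ p.support, v ∈ X t)

/-- `G` has a tree decomposition of width at most `k`. -/
def TreewidthAtMost {V : Type*} (G : SimpleGraph V) (k : ℕ) : Prop :=
  ∃ (ι : Type) (T : SimpleGraph ι) (X : ι → Set V),
    IsTreeDecomp G T X ∧ ∀ t : ι, (X t).Finite ∧ (X t).ncard ≤ k + 1

/-- `G` has a path decomposition (a tree decomposition whose tree is a path) of width at
most `k`. -/
def PathwidthAtMost {V : Type*} (G : SimpleGraph V) (k : ℕ) : Prop :=
  ∃ (m : ℕ) (X : Fin m → Set V),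
    IsTreeDecomp G (SimpleGraph.pathGraph m) X ∧
    ∀ t : Fin m, (X t).Finite ∧ (X t).ncard ≤ k + 1

namespace PWAux

open SimpleGraph

lemma cross {m : ℕ} {c : Fin m} : ∀ {a b : Fin m} (p : (pathGraph m).Walk a b),
    b.val ≤ c.val → c.val ≤ a.val → c ∈ p.support := by
  intro a b p
  induction p with
  | nil =>
    intro h1 h2
    rw [Fin.ext (le_antisymm h2 h1 : _)]
    exact Walk.start_mem_support _
  | @cons a a' b h q ih =>
    intro h1 h2
    rcases eq_or_ne c a with rfl | hne
    · simp
    · have hlt : c.val < a.val := lt_of_le_of_ne h2 fun he => hne (Fin.ext he)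
      rw [pathGraph_adj] at h
      have hca' : c.val ≤ a'.val := by omega
      simp only [Walk.support_cons, List.mem_cons]
      exact Or.inr (ih h1 hca')

lemma not_both {m : ℕ} {a b : Fin m} {p : (pathGraph m).Walk a b} (hp : p.IsPath)
    {t x : Fin m} (ht : t ∈ p.support) (hxt : x ≠ t)
    (hx1 : x ∈ (p.takeUntil t ht).support) (hx2 : x ∈ (p.dropUntil t ht).support) : False := by
  have hnd := hp.support_nodup
  rw [← p.take_spec ht, Walk.support_append, List.nodup_append] at hnd
  have hx2' : x ∈ (p.dropUntil t ht).support.tail := by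
    rw [(p.dropUntil t ht).support_eq_cons] at hx2
    rcases List.mem_cons.mp hx2 with rfl | h
    · exact absurd rfl hxt
    · exact h
  exact hnd.2.2 x hx1 x hx2' rfl

lemma interval {m : ℕ} {a b : Fin m} {p : (pathGraph m).Walk a b} (hp : p.IsPath)
    {t : Fin m} (ht : t ∈ p.support) :
    (a.val ≤ t.val ∧ t.val ≤ b.val) ∨ (b.val ≤ t.val ∧ t.val ≤ a.val) := by
  by_contra hcon
  set p₁ := p.takeUntil t ht with hp₁
  set p₂ := p.dropUntil t ht with hp₂
  rcases le_total a.val b.val with hab | hab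
  · have hcase : t.val < a.val ∨ b.val < t.val := by omega
    rcases hcase with hta | htb
    · have hat : a ≠ t := fun he => by omega
      have hmem2 : a ∈ p₂.support := by
        have := cross (c := a) p₂.reverse (by omega) (by omega)
        rwa [Walk.support_reverse, List.mem_reverse] at this
      exact not_both hp ht hat p₁.start_mem_support hmem2
    · have hbt : b ≠ t := fun he => by omega
      have hmem1 : b ∈ p₁.support := by
        have := cross (c := b) p₁.reverse (by omega) (by omega)
        rwa [Walk.support_reverse, List.mem_reverse] at this
      exact not_both hp ht hbt hmem1 p₂.end_mem_support
  · have hcase : t.val < b.val ∨ a.val < t.val := by omega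
    rcases hcase with htb | hta
    · have hbt : b ≠ t := fun he => by omega
      have hmem1 : b ∈ p₁.support := cross p₁ (by omega) (by omega)
      exact not_both hp ht hbt hmem1 p₂.end_mem_support
    · have hat : a ≠ t := fun he => by omega
      have hmem2 : a ∈ p₂.support := cross p₂ (by omega) (by omega)
      exact not_both hp ht hat p₁.start_mem_support hmem2

lemma isTree_pathGraph {m : ℕ} (hm : 1 ≤ m) : (pathGraph m).IsTree := by
  constructor
  · have h : m - 1 + 1 = m := Nat.succ_pred_eq_of_pos hm
    exact h ▸ pathGraph_connected (m - 1)
  · intro v p hp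
    cases p with
    | nil => exact hp.ne_nil rfl
    | @cons _ w _ h q =>
      have hq : q.IsPath := by
        apply Walk.IsPath.mk'
        have := hp.2
        simpa using this
      have h3 := hp.three_le_length
      rw [pathGraph_adj] at h
      have hsub : ∀ t ∈ q.support, t.val = w.val ∨ t.val = v.val := by
        intro t htm
        have hint := interval hq htm
        omega
      have hnd := hq.support_nodup
      have hlen : q.support.length ≤ 2 := by
        have hcard : q.support.toFinset.card = q.support.length :=
          List.toFinset_card_of_nodup hnd
        have hss : q.support.toFinset ⊆ {w, v} := by
          intro t htm
          rw [List.mem_toFinset] at htm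
          rcases hsub t htm with h' | h' <;> simp [Fin.ext h']
        have hle := Finset.card_le_card hss
        have h2 : ({w, v} : Finset (Fin _)).card ≤ 2 :=
          (Finset.card_insert_le _ _).trans (by simp)
        omega
      have hls : q.length + 1 = q.support.length := (Walk.length_support q).symm
      simp [Walk.length_cons] at h3
      omega

end PWAux

/-- a connected graph `G` with at most `C` induced connected subgraphs
(`C ≥ 2`) has pathwidth, and hence treewidth, at most `2 · log₂ C`. -/
theorem pathwidth_le_two_log {V : Type*} [Fintype V] [DecidableEq V]
    (G : SimpleGraph V) (hG : G.Connected) (C : ℕ) (hC : 2 ≤ C)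
    (hcount : ((Finset.univ.powerset).filter
        (fun S : Finset V => (G.induce (↑S : Set V)).Connected)).card ≤ C) :
    ∃ k : ℕ, (k : ℝ) ≤ 2 * Real.logb 2 C ∧
      PathwidthAtMost G k ∧ TreewidthAtMost G k := by
  classical
  obtain ⟨root⟩ := hG.nonempty
  set d : V → ℕ := fun v => G.dist root v with hd
  have hdm : ∀ v, d v < Fintype.card V := by
    intro v
    obtain ⟨p, hp⟩ := (hG root v).exists_walk_length_eq_dist
    calc d v ≤ p.bypass.length := SimpleGraph.dist_le _
      _ < Fintype.card V := p.bypass_isPath.length_lt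
  set L : ℕ → Finset V := fun i => univ.filter (fun v => d v = i) with hL
  -- connectivity of ball ∪ subset-of-next-level
  have hconn : ∀ (i : ℕ) (T : Finset V), (∀ v, d v ≤ i → v ∈ T) →
      (∀ v ∈ T, d v ≤ i + 1) → (G.induce (↑T : Set V)).Connected := by
    intro i T hTlow hThigh
    have hroot : root ∈ T := hTlow root (by simp [hd, SimpleGraph.dist_self])
    have key : ∀ n, ∀ v, ∀ hv : v ∈ T, d v = n →
        (G.induce (↑T : Set V)).Reachable ⟨v, Finset.mem_coe.mpr hv⟩
          ⟨root, Finset.mem_coe.mpr hroot⟩ := by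
      intro n
      induction n using Nat.strong_induction_on with
      | _ n ih =>
        intro v hv hdv
        rcases Nat.eq_zero_or_pos n with rfl | hpos
        · have hveq : root = v := hG.dist_eq_zero_iff.mp hdv
          subst hveq
          rfl
        · have hvr : root ≠ v := by
            intro he
            rw [← he] at hdv
            simp [hd, SimpleGraph.dist_self] at hdv
            omega
          obtain ⟨p, hp⟩ := (hG root v).exists_walk_length_eq_dist
          obtain ⟨u, hadj, q, hq⟩ := SimpleGraph.Walk.exists_eq_cons_of_ne (Ne.symm hvr) p.reverse
          have hqlen : q.length = n - 1 := by
            have h1 : p.reverse.length = n := by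
              rw [SimpleGraph.Walk.length_reverse, hp]; exact hdv
            rw [hq] at h1
            simp [SimpleGraph.Walk.length_cons] at h1
            omega
          have hdu : d u ≤ n - 1 := by
            have : G.dist u root ≤ q.length := SimpleGraph.dist_le q
            rw [hqlen] at this
            calc d u = G.dist u root := by rw [hd]; exact SimpleGraph.dist_comm
              _ ≤ n - 1 := this
          have hnle : n ≤ i + 1 := hdv ▸ hThigh v hv
          have hu : u ∈ T := hTlow u (by omega)
          have hreach : (G.induce (↑T : Set V)).Reachable ⟨u, Finset.mem_coe.mpr hu⟩
              ⟨root, Finset.mem_coe.mpr hroot⟩ := ih (d u) (by omega) u hu rfl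
          have hadj' : (G.induce (↑T : Set V)).Adj ⟨v, Finset.mem_coe.mpr hv⟩
              ⟨u, Finset.mem_coe.mpr hu⟩ := by
            simpa [SimpleGraph.comap_adj] using hadj
          exact hadj'.reachable.trans hreach
    refine (SimpleGraph.connected_iff _).mpr ⟨?_, ⟨⟨root, Finset.mem_coe.mpr hroot⟩⟩⟩
    rintro ⟨x, hx⟩ ⟨y, hy⟩
    exact (key (d x) x (Finset.mem_coe.mp hx) rfl).trans
      (key (d y) y (Finset.mem_coe.mp hy) rfl).symm
  -- level bound
  have hC0 : C ≠ 0 := by omega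
  have hlog : ∀ i : ℕ, (L i).card ≤ Nat.log 2 C := by
    intro i
    cases i with
    | zero =>
      have hL0 : L 0 = {root} := by
        ext v
        simp only [hL, Finset.mem_filter, Finset.mem_univ, true_and, Finset.mem_singleton]
        constructor
        · intro h
          exact (hG.dist_eq_zero_iff.mp h).symm
        · rintro rfl
          simp [hd, SimpleGraph.dist_self]
      rw [hL0, Finset.card_singleton]
      exact Nat.log_pos (by norm_num) hC
    | succ i =>
      set B : Finset V := univ.filter (fun v => d v ≤ i) with hB
      have hsub : ∀ S S' : Finset V, S ⊆ L (i + 1) → B ∪ S = B ∪ S' → S ⊆ S' := by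
        intro S S' hSs heq a ha
        have hda : d a = i + 1 := (Finset.mem_filter.mp (hSs ha)).2
        have hnB : a ∉ B := by simp only [hB, Finset.mem_filter]; push_neg; intro; omega
        have hmem : a ∈ B ∪ S' := heq ▸ Finset.mem_union_right _ ha
        rcases Finset.mem_union.mp hmem with h | h
        · exact absurd h hnB
        · exact h
      have hmaps : ∀ S ∈ (L (i + 1)).powerset,
          B ∪ S ∈ ((Finset.univ.powerset).filter
            (fun S : Finset V => (G.induce (↑S : Set V)).Connected)) := by
        intro S hS
        have hSs : S ⊆ L (i + 1) := Finset.mem_powerset.mp hS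
        refine Finset.mem_filter.mpr ⟨Finset.mem_powerset.mpr (Finset.subset_univ _), ?_⟩
        refine hconn i (B ∪ S) (fun v hv => Finset.mem_union_left _ ?_) (fun v hv => ?_)
        · simp only [hB, Finset.mem_filter, Finset.mem_univ, true_and]
          exact hv
        · rcases Finset.mem_union.mp hv with h | h
          · have := (Finset.mem_filter.mp h).2
            omega
          · have := (Finset.mem_filter.mp (hSs h)).2
            omega
      have hinj : Set.InjOn (fun S => B ∪ S) ((L (i + 1)).powerset : Set (Finset V)) := by
        intro S hS S' hS' heq
        have hSs : S ⊆ L (i + 1) := Finset.mem_powerset.mp (Finset.mem_coe.mp hS)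
        have hSs' : S' ⊆ L (i + 1) := Finset.mem_powerset.mp (Finset.mem_coe.mp hS')
        exact Finset.Subset.antisymm (hsub _ _ hSs heq) (hsub _ _ hSs' heq.symm)
      have hcard := Finset.card_le_card_of_injOn (fun S => B ∪ S) hmaps hinj
      rw [Finset.card_powerset] at hcard
      have h2C : 2 ^ (L (i + 1)).card ≤ C := hcard.trans hcount
      exact (Nat.le_log_iff_pow_le (by norm_num) hC0).mpr h2C
  -- assemble the decomposition
  set m := Fintype.card V with hm
  have hm1 : 1 ≤ m := @Fintype.card_pos V _ ⟨root⟩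
  set X : Fin m → Set V := fun t => {v | d v = t.val ∨ d v = t.val + 1} with hX
  have hdecomp : IsTreeDecomp G (SimpleGraph.pathGraph m) X := by
    refine ⟨PWAux.isTree_pathGraph hm1, ?_, ?_, ?_⟩
    · intro v
      exact ⟨⟨d v, hdm v⟩, Or.inl rfl⟩
    · intro u v huv
      have ht1 : d v ≤ d u + 1 := by
        have h1 := hG.dist_triangle (u := root) (v := u) (w := v)
        have h2 : G.dist u v = 1 := SimpleGraph.dist_eq_one_iff_adj.mpr huv
        simp only [hd]
        omega
      have ht2 : d u ≤ d v + 1 := by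
        have h1 := hG.dist_triangle (u := root) (v := v) (w := u)
        have h2 : G.dist v u = 1 := SimpleGraph.dist_eq_one_iff_adj.mpr huv.symm
        simp only [hd]
        omega
      refine ⟨⟨min (d u) (d v), lt_of_le_of_lt (min_le_left _ _) (hdm u)⟩, ?_, ?_⟩
      · show d u = min (d u) (d v) ∨ d u = min (d u) (d v) + 1
        omega
      · show d v = min (d u) (d v) ∨ d v = min (d u) (d v) + 1
        omega
    · intro v t₁ t₂ hv1 hv2 p hp t htmem
      have hint := PWAux.interval hp htmem
      simp only [hX, Set.mem_setOf_eq] at hv1 hv2 ⊢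
      omega
  have hbound : ∀ t : Fin m, (X t).Finite ∧ (X t).ncard ≤ 2 * Nat.log 2 C + 1 := by
    intro t
    have hXeq : X t = ↑(L t.val ∪ L (t.val + 1)) := by
      ext v
      simp [hX, hL]
    constructor
    · rw [hXeq]
      exact (L t.val ∪ L (t.val + 1)).finite_toSet
    · rw [hXeq, Set.ncard_coe_finset]
      have h1 := Finset.card_union_le (L t.val) (L (t.val + 1))
      have h2 := hlog t.val
      have h3 := hlog (t.val + 1)
      omega
  refine ⟨2 * Nat.log 2 C, ?_, ⟨m, X, hdecomp, hbound⟩, ⟨Fin m, _, X, hdecomp, hbound⟩⟩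
  have hlogle : (Nat.log 2 C : ℝ) ≤ Real.logb 2 C := Real.natLog_le_logb C 2
  push_cast
  linarith
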